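/- arXiv:1304.5530 — 2 statements merged into one kernel-verified Lean document; each statement's English description precedes it below -/
import Mathlib

section
/- Suppose F = f + Ψ attains its minimum value F*. Then for every x ∈ E and every T = (T_1,…,T_n) ∈ E, (1/n) Σ_{i=1}^n F(x + U_i T_i) − F* ≤ (1/n)(H(x,T) − F*) + ((n−1)/n)(F(x) − F*). -/
open scoped RealInnerProductSpace
open MeasureTheory

noncomputable section

variable {n : ℕ} {E : Fin n → Type*} [∀ i, NormedAddCommGroup (E i)]
  [∀ i, InnerProductSpace ℝ (E i)] [∀ i, FiniteDimensional ℝ (E i)]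

/-- `U i t`: embedding of the `i`-th block into the product space `E = E₁ × ⋯ × Eₙ`
(the vector with `i`-th block equal to `t` and all other blocks zero). -/
def blockEmbed (i : Fin n) (t : E i) : PiLp 2 E :=
  (WithLp.equiv 2 (∀ j, E j)).symm (Pi.single i t)

set_option linter.unusedSectionVars false

lemma blockEmbed_apply (i j : Fin n) (t : E i) : blockEmbed i t j = Pi.single i t j := rfl

lemma blockEmbed_apply_same (i : Fin n) (t : E i) : blockEmbed i t i = t := by
  rw [blockEmbed_apply, Pi.single_eq_same]

lemma blockEmbed_apply_ne {i j : Fin n} (h : j ≠ i) (t : E i) : blockEmbed i t j = 0 := by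
  rw [blockEmbed_apply, Pi.single_eq_of_ne h]

lemma blockEmbed_smul (i : Fin n) (t : E i) (c : ℝ) :
    blockEmbed i (c • t) = c • blockEmbed i t := by
  ext j
  have hc : (c • blockEmbed i t) j = c • (blockEmbed i t j) := rfl
  rcases eq_or_ne j i with rfl | h
  · rw [blockEmbed_apply_same, hc, blockEmbed_apply_same]
  · rw [blockEmbed_apply_ne h, hc, blockEmbed_apply_ne h, smul_zero]

lemma inner_blockEmbed (g : PiLp 2 E) (i : Fin n) (t : E i) :
    ⟪g, blockEmbed i t⟫ = ⟪g i, t⟫ := by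
  rw [PiLp.inner_apply, Finset.sum_eq_single i]
  · rw [blockEmbed_apply_same]
  · intro j _ hj
    rw [blockEmbed_apply_ne hj, inner_zero_right]
  · simp

lemma hasDerivAt_line (f : PiLp 2 E → ℝ) (hfdiff : Differentiable ℝ f)
    (x : PiLp 2 E) (i : Fin n) (t : E i) (s : ℝ) :
    HasDerivAt (fun s : ℝ => f (x + s • blockEmbed i t))
      ⟪(gradient f (x + s • blockEmbed i t)) i, t⟫ s := by
  set y := x + s • blockEmbed i t
  have hg : HasFDerivAt f ((InnerProductSpace.toDual ℝ _) (gradient f y)) y :=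
    ((hfdiff y).hasGradientAt).hasFDerivAt
  have hc : HasDerivAt (fun s : ℝ => x + s • blockEmbed i t) (blockEmbed i t) s := by
    simpa using ((hasDerivAt_id s).smul_const (blockEmbed i t)).const_add x
  have h2 := hg.comp_hasDerivAt s hc
  have h3 : (InnerProductSpace.toDual ℝ _) (gradient f y) (blockEmbed i t)
      = ⟪(gradient f y) i, t⟫ := by
    rw [InnerProductSpace.toDual_apply_apply, inner_blockEmbed]
  rw [h3] at h2
  exact h2

lemma descent_lemma (f : PiLp 2 E → ℝ) (hfdiff : Differentiable ℝ f)
    (L : Fin n → ℝ) (hLi : ∀ i, 0 ≤ L i)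
    (hLip : ∀ (x : PiLp 2 E) (i : Fin n) (t : E i),
      ‖(gradient f (x + blockEmbed i t)) i - (gradient f x) i‖ ≤ L i * ‖t‖)
    (x : PiLp 2 E) (i : Fin n) (t : E i) :
    f (x + blockEmbed i t) ≤ f x + ⟪(gradient f x) i, t⟫ + L i / 2 * ‖t‖ ^ 2 := by
  set u := blockEmbed i t with hu
  set h : ℝ → ℝ := fun s => ⟪(gradient f (x + s • u)) i, t⟫ with hh
  -- Lipschitz-type bound on h
  have hlipsh : ∀ s s' : ℝ, |h s - h s'| ≤ L i * ‖t‖ ^ 2 * |s - s'| := by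
    intro s s'
    have key : x + s • u = (x + s' • u) + blockEmbed i ((s - s') • t) := by
      rw [blockEmbed_smul, ← hu]
      module
    have hb := hLip (x + s' • u) i ((s - s') • t)
    rw [← key] at hb
    have : h s - h s' = ⟪(gradient f (x + s • u)) i - (gradient f (x + s' • u)) i, t⟫ := by
      rw [hh]; simp [inner_sub_left]
    rw [this]
    calc |⟪(gradient f (x + s • u)) i - (gradient f (x + s' • u)) i, t⟫|
        ≤ ‖(gradient f (x + s • u)) i - (gradient f (x + s' • u)) i‖ * ‖t‖ :=
          abs_real_inner_le_norm _ _
      _ ≤ (L i * ‖(s - s') • t‖) * ‖t‖ := by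
          apply mul_le_mul_of_nonneg_right hb (norm_nonneg _)
      _ = L i * ‖t‖ ^ 2 * |s - s'| := by
          rw [norm_smul]; simp [Real.norm_eq_abs]; ring
  have hcont : Continuous h := by
    rw [Metric.continuous_iff]
    intro s ε hε
    rcases eq_or_lt_of_le (mul_nonneg (hLi i) (by positivity) : (0:ℝ) ≤ L i * ‖t‖ ^ 2) with hC | hC
    · exact ⟨1, one_pos, fun s' _ => by
        have := hlipsh s' s
        rw [← hC, zero_mul] at this
        simpa [Real.dist_eq] using lt_of_le_of_lt this hε⟩
    · refine ⟨ε / (L i * ‖t‖ ^ 2), div_pos hε hC, fun s' hs' => ?_⟩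
      have := hlipsh s' s
      rw [Real.dist_eq]
      calc |h s' - h s| ≤ L i * ‖t‖ ^ 2 * |s' - s| := this
        _ < L i * ‖t‖ ^ 2 * (ε / (L i * ‖t‖ ^ 2)) := by
            apply mul_lt_mul_of_pos_left _ hC
            rwa [Real.dist_eq] at hs'
        _ = ε := by rw [mul_comm]; exact div_mul_cancel₀ ε hC.ne'
  have hderiv : ∀ s ∈ Set.uIcc (0:ℝ) 1,
      HasDerivAt (fun s : ℝ => f (x + s • u)) (h s) s :=
    fun s _ => hasDerivAt_line f hfdiff x i t s
  have hint : IntervalIntegrable h MeasureTheory.volume 0 1 :=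
    hcont.intervalIntegrable 0 1
  have hftc := intervalIntegral.integral_eq_sub_of_hasDerivAt hderiv hint
  have h10 : f (x + u) - f x = ∫ s in (0:ℝ)..1, h s := by
    rw [hftc]; norm_num
  -- pointwise bound on [0,1]
  have hpt : ∀ s ∈ Set.Icc (0:ℝ) 1, h s ≤ h 0 + L i * ‖t‖ ^ 2 * s := by
    intro s hs
    have := hlipsh s 0
    rw [sub_zero, abs_of_nonneg hs.1] at this
    have := abs_le.mp this
    linarith [this.2]
  have hintle : (∫ s in (0:ℝ)..1, h s) ≤ ∫ s in (0:ℝ)..1, (h 0 + L i * ‖t‖ ^ 2 * s) := by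
    apply intervalIntegral.integral_mono_on (by norm_num) hint
    · exact (Continuous.intervalIntegrable (by continuity) 0 1)
    · exact hpt
  have hval : (∫ s in (0:ℝ)..1, (h 0 + L i * ‖t‖ ^ 2 * s)) = h 0 + L i / 2 * ‖t‖ ^ 2 := by
    rw [intervalIntegral.integral_add intervalIntegrable_const
      (Continuous.intervalIntegrable (by continuity) 0 1)]
    rw [intervalIntegral.integral_const_mul, integral_id]
    simp
    ring
  have hzero : h 0 = ⟪(gradient f x) i, t⟫ := by
    rw [hh]; simp
  have hfinal : f (x + u) - f x ≤ h 0 + L i / 2 * ‖t‖ ^ 2 := by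
    rw [h10, ← hval]; exact hintle
  rw [hzero] at hfinal
  linarith

/-- `V_i(x,t) = ⟨∇_i f(x), t⟩ + (L_i/2)‖t‖² + Ψ_i(x_i + t)`. -/
def Vi (f : PiLp 2 E → ℝ) (L : Fin n → ℝ) (Ψ : ∀ i, E i → ℝ)
    (x : PiLp 2 E) (i : Fin n) (t : E i) : ℝ :=
  ⟪(gradient f x) i, t⟫ + L i / 2 * ‖t‖ ^ 2 + Ψ i (x i + t)

/-- `T` is a `δ`-inexact update at `x`:
`V_i(x, T_i) ≤ min{V_i(x,0), δ_i + inf_t V_i(x,t)}` for every block `i`. -/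
def IsInexactUpdate (f : PiLp 2 E → ℝ) (L : Fin n → ℝ) (Ψ : ∀ i, E i → ℝ)
    (δ : Fin n → ℝ) (x T : PiLp 2 E) : Prop :=
  ∀ i, Vi f L Ψ x i (T i) ≤ min (Vi f L Ψ x i 0) (δ i + ⨅ t : E i, Vi f L Ψ x i t)

/-- `H(x,T) = f(x) + ⟨∇f(x), T⟩ + (1/2)‖T‖_L² + Ψ(x+T)`. -/
def Hfun (f : PiLp 2 E → ℝ) (L : Fin n → ℝ) (Ψ : ∀ i, E i → ℝ) (x T : PiLp 2 E) : ℝ :=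
  f x + ⟪gradient f x, T⟫ + (1/2) * ∑ i, L i * ‖T i‖ ^ 2 + ∑ i, Ψ i (x i + T i)

/-- `F = f + Ψ` where `Ψ(x) = Σ_i Ψ_i(x_i)`. -/
def Ffun (f : PiLp 2 E → ℝ) (Ψ : ∀ i, E i → ℝ) (x : PiLp 2 E) : ℝ :=
  f x + ∑ i, Ψ i (x i)

/-- Expected residual after one uniform-random block update:
`(1/n) Σ_i F(x + U_i T_i) − F* ≤ (1/n)(H(x,T) − F*) + ((n−1)/n)(F(x) − F*)`. -/
theorem expected_residual_le
    (hn : 0 < n)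
    (L : Fin n → ℝ) (hL : ∀ i, 0 < L i)
    (f : PiLp 2 E → ℝ) (hfdiff : Differentiable ℝ f) (hfconv : ConvexOn ℝ Set.univ f)
    (hLip : ∀ (x : PiLp 2 E) (i : Fin n) (t : E i),
      ‖(gradient f (x + blockEmbed i t)) i - (gradient f x) i‖ ≤ L i * ‖t‖)
    (Ψ : ∀ i, E i → ℝ) (hΨconv : ∀ i, ConvexOn ℝ Set.univ (Ψ i))
    (hΨcont : ∀ i, Continuous (Ψ i))
    (Fstar : ℝ) (xstar : PiLp 2 E) (hstar : Ffun f Ψ xstar = Fstar)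
    (hmin : ∀ y, Fstar ≤ Ffun f Ψ y)
    (x T : PiLp 2 E) :
    (1 / (n : ℝ)) * ∑ i, Ffun f Ψ (x + blockEmbed i (T i)) - Fstar ≤
      (1 / (n : ℝ)) * (Hfun f L Ψ x T - Fstar) +
        (((n : ℝ) - 1) / (n : ℝ)) * (Ffun f Ψ x - Fstar) := by
  simp only [Ffun, Hfun]
  have hΨsum : ∀ i, ∑ j, Ψ j ((x + blockEmbed i (T i)) j)
      = ∑ j, Ψ j (x j) + (Ψ i (x i + T i) - Ψ i (x i)) := by
    intro i
    have h1 : ∑ j, Ψ j ((x + blockEmbed i (T i)) j) - ∑ j, Ψ j (x j)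
        = ∑ j, (Ψ j ((x + blockEmbed i (T i)) j) - Ψ j (x j)) :=
      (Finset.sum_sub_distrib _ _).symm
    have h2 : ∑ j, (Ψ j ((x + blockEmbed i (T i)) j) - Ψ j (x j))
        = Ψ i (x i + T i) - Ψ i (x i) := by
      rw [Finset.sum_eq_single i]
      · have : (x + blockEmbed i (T i)) i = x i + T i := by
          show x i + blockEmbed i (T i) i = x i + T i
          rw [blockEmbed_apply_same]
        rw [this]
      · intro j _ hj
        have : (x + blockEmbed i (T i)) j = x j := by
          show x j + blockEmbed i (T i) j = x j
          rw [blockEmbed_apply_ne hj, add_zero]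
        rw [this, sub_self]
      · simp
    linarith [h1.symm ▸ h2]
  have hkey : ∀ i, f (x + blockEmbed i (T i)) + ∑ j, Ψ j ((x + blockEmbed i (T i)) j)
      ≤ (f x + ∑ j, Ψ j (x j)) + (⟪(gradient f x) i, T i⟫ + L i / 2 * ‖T i‖ ^ 2
          + (Ψ i (x i + T i) - Ψ i (x i))) := by
    intro i
    have hd := descent_lemma f hfdiff L (fun i => (hL i).le) hLip x i (T i)
    have := hΨsum i
    linarith
  have key : ∑ i, (f (x + blockEmbed i (T i)) + ∑ j, Ψ j ((x + blockEmbed i (T i)) j))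
      ≤ (f x + ⟪gradient f x, T⟫ + (1/2) * ∑ i, L i * ‖T i‖ ^ 2 + ∑ i, Ψ i (x i + T i))
        + ((n:ℝ) - 1) * (f x + ∑ j, Ψ j (x j)) := by
    calc ∑ i, (f (x + blockEmbed i (T i)) + ∑ j, Ψ j ((x + blockEmbed i (T i)) j))
        ≤ ∑ i, ((f x + ∑ j, Ψ j (x j)) + (⟪(gradient f x) i, T i⟫ + L i / 2 * ‖T i‖ ^ 2
            + (Ψ i (x i + T i) - Ψ i (x i)))) := Finset.sum_le_sum fun i _ => hkey i
      _ = (f x + ⟪gradient f x, T⟫ + (1/2) * ∑ i, L i * ‖T i‖ ^ 2 + ∑ i, Ψ i (x i + T i))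
          + ((n:ℝ) - 1) * (f x + ∑ j, Ψ j (x j)) := by
          rw [PiLp.inner_apply]
          simp only [Finset.sum_add_distrib, Finset.sum_sub_distrib, Finset.sum_const,
            Finset.card_univ, Fintype.card_fin, nsmul_eq_mul]
          have hhalf : ∑ i, L i / 2 * ‖T i‖ ^ 2 = 1/2 * ∑ i, L i * ‖T i‖ ^ 2 := by
            rw [Finset.mul_sum]; apply Finset.sum_congr rfl; intro i _; ring
          rw [hhalf]
          push_cast
          ring
  have hnpos : (0:ℝ) < n := by exact_mod_cast hn
  have hinv : (0:ℝ) ≤ 1 / (n:ℝ) := by positivity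
  have h2 := mul_le_mul_of_nonneg_left key hinv
  have hn0 : (n:ℝ) ≠ 0 := ne_of_gt hnpos
  have h2' : (1/(n:ℝ)) * ∑ i, (f (x + blockEmbed i (T i)) + ∑ j, Ψ j ((x + blockEmbed i (T i)) j))
      ≤ (1/(n:ℝ)) * (f x + ⟪gradient f x, T⟫ + (1/2) * ∑ i, L i * ‖T i‖ ^ 2 + ∑ i, Ψ i (x i + T i))
        + (((n:ℝ)-1)/(n:ℝ)) * (f x + ∑ j, Ψ j (x j)) := by
    calc _ ≤ _ := h2
      _ = _ := by ring
  have hFstar : (1/(n:ℝ)) * Fstar + (((n:ℝ)-1)/(n:ℝ)) * Fstar = Fstar := by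
    field_simp; ring
  rw [mul_sub, mul_sub]
  linarith [h2', hFstar]
end
end

section
/- Assume in addition that: (a) f satisfies f(y) ≥ f(x) + ⟨∇f(x), y − x⟩ + (μ_f/2)‖y − x‖_L² for all x, y ∈ E with 0 ≤ μ_f ≤ 1; (b) Ψ satisfies Ψ(λx + (1−λ)y) ≤ λΨ(x) + (1−λ)Ψ(y) − (μ_Ψ λ(1−λ)/2)‖x − y‖_L² for all x, y ∈ E and λ ∈ [0,1], with μ_Ψ ≥ 0; and (c) μ_f + μ_Ψ > 0. Suppose F = f + Ψ attains its minimum value F*. Then for every x ∈ E, every δ = (δ_1,…,δ_n) with δ_i ≥ 0, and every δ-inexact update T at x, with Δ = Σ_{i=1}^n δ_i, one has H(x, T) − F* ≤ Δ + ((1 − μ_f)/(1 + μ_Ψ))·(F(x) − F*). -/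
open scoped RealInnerProductSpace
open MeasureTheory

noncomputable section

variable {n : ℕ} {E : Fin n → Type*} [∀ i, NormedAddCommGroup (E i)]
  [∀ i, InnerProductSpace ℝ (E i)] [∀ i, FiniteDimensional ℝ (E i)]

/-- A convex continuous function on a finite-dimensional space has a linear lower bound. -/
lemma convex_linear_lower_bound {G : Type*} [NormedAddCommGroup G] [InnerProductSpace ℝ G]
    [FiniteDimensional ℝ G]
    (Ψ : G → ℝ) (hconv : ConvexOn ℝ Set.univ Ψ) (hcont : Continuous Ψ) :
    ∃ C : ℝ, 0 ≤ C ∧ ∀ s : G, -(C * (1 + ‖s‖)) ≤ Ψ s := by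
  obtain ⟨C0, hC0⟩ := (isCompact_closedBall (0:G) 1).exists_bound_of_continuousOn hcont.continuousOn
  set C := max C0 0 with hCdef
  have hC : 0 ≤ C := le_max_right _ _
  have hb : ∀ u : G, ‖u‖ ≤ 1 → |Ψ u| ≤ C := by
    intro u hu
    have := hC0 u (by simpa [Metric.mem_closedBall, dist_eq_norm] using hu)
    exact le_trans (by simpa [Real.norm_eq_abs] using this) (le_max_left _ _)
  refine ⟨2*C, by linarith, fun s => ?_⟩
  rcases le_or_gt ‖s‖ 1 with h|h
  · have h4 := abs_le.mp (hb s h)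
    have h0 : (0:ℝ) ≤ ‖s‖ := norm_nonneg s
    nlinarith [h4.1]
  · set r := ‖s‖ with hrdef
    have hrpos : (0:ℝ) < r := by linarith
    have hu : ‖(r⁻¹) • s‖ ≤ 1 := by
      rw [norm_smul, Real.norm_eq_abs, abs_inv, abs_of_pos hrpos, ← hrdef,
        inv_mul_cancel₀ (ne_of_gt hrpos)]
    have key := hconv.2 (Set.mem_univ s) (Set.mem_univ (0:G))
      (by positivity : (0:ℝ) ≤ r⁻¹) (by
        have : r⁻¹ ≤ 1 := by rw [inv_le_one_iff₀]; right; linarith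
        linarith : (0:ℝ) ≤ 1 - r⁻¹) (by ring)
    rw [smul_zero, add_zero] at key
    have h4 : -C ≤ Ψ (r⁻¹ • s) := neg_le_of_abs_le (hb _ hu)
    have h5 : Ψ 0 ≤ C := le_of_abs_le (hb 0 (by simp))
    have h3 : r * (r⁻¹ * Ψ s + (1 - r⁻¹) * Ψ 0) = Ψ s + (r - 1) * Ψ 0 := by
      field_simp
    have h6 : r * Ψ (r⁻¹ • s) ≤ Ψ s + (r - 1) * Ψ 0 := by
      calc r * Ψ (r⁻¹ • s) ≤ r * (r⁻¹ * Ψ s + (1 - r⁻¹) * Ψ 0) :=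
            mul_le_mul_of_nonneg_left key hrpos.le
        _ = _ := h3
    nlinarith [mul_le_mul_of_nonneg_left h4 hrpos.le,
      mul_le_mul_of_nonneg_left h5 (by linarith : (0:ℝ) ≤ r - 1)]

/-- The block model `t ↦ ⟨g,t⟩ + (L/2)‖t‖² + Ψ(a+t)` is bounded below. -/
lemma quad_model_lower_bound {G : Type*} [NormedAddCommGroup G] [InnerProductSpace ℝ G]
    (g a : G) (Lc C : ℝ) (hLc : 0 < Lc) (hC : 0 ≤ C) (Ψ : G → ℝ)
    (hlow : ∀ s : G, -(C * (1 + ‖s‖)) ≤ Ψ s) :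
    ∃ B : ℝ, ∀ t : G, B ≤ ⟪g, t⟫ + Lc / 2 * ‖t‖ ^ 2 + Ψ (a + t) := by
  refine ⟨-((‖g‖ + C)^2/(2*Lc) + C*(1+‖a‖)), fun t => ?_⟩
  have h1 : -(‖g‖*‖t‖) ≤ ⟪g, t⟫ := neg_le_of_abs_le (abs_real_inner_le_norm g t)
  have h2 : -(C*(1+‖a+t‖)) ≤ Ψ (a+t) := hlow _
  have h3 : C*‖a+t‖ ≤ C*(‖a‖+‖t‖) := mul_le_mul_of_nonneg_left (norm_add_le a t) hC
  have hq : -((‖g‖+C)^2/(2*Lc)) ≤ Lc/2*‖t‖^2 - (‖g‖+C)*‖t‖ := by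
    rw [neg_le, le_div_iff₀ (by linarith : (0:ℝ) < 2*Lc)]
    nlinarith [sq_nonneg (Lc*‖t‖ - (‖g‖+C))]
  nlinarith [hq]

/-- Lemma 5 of the paper (strongly convex composite case):
`H(x,T) − F* ≤ Δ + ((1 − μ_f)/(1 + μ_Ψ))(F(x) − F*)`. -/
theorem Hfun_strongly_convex_bound
    (hn : 0 < n)
    (L : Fin n → ℝ) (hL : ∀ i, 0 < L i)
    (f : PiLp 2 E → ℝ) (hfdiff : Differentiable ℝ f) (hfconv : ConvexOn ℝ Set.univ f)
    (hLip : ∀ (x : PiLp 2 E) (i : Fin n) (t : E i),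
      ‖(gradient f (x + blockEmbed i t)) i - (gradient f x) i‖ ≤ L i * ‖t‖)
    (Ψ : ∀ i, E i → ℝ) (hΨconv : ∀ i, ConvexOn ℝ Set.univ (Ψ i))
    (hΨcont : ∀ i, Continuous (Ψ i))
    (μf μΨ : ℝ) (hμf0 : 0 ≤ μf) (hμf1 : μf ≤ 1) (hμΨ0 : 0 ≤ μΨ) (hμpos : 0 < μf + μΨ)
    (hscf : ∀ x y : PiLp 2 E,
      f x + ⟪gradient f x, y - x⟫ + μf / 2 * ∑ i, L i * ‖y i - x i‖ ^ 2 ≤ f y)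
    (hscΨ : ∀ x y : PiLp 2 E, ∀ lam ∈ Set.Icc (0:ℝ) 1,
      ∑ i, Ψ i ((lam • x + (1 - lam) • y) i) ≤
        lam * ∑ i, Ψ i (x i) + (1 - lam) * ∑ i, Ψ i (y i)
          - μΨ * lam * (1 - lam) / 2 * ∑ i, L i * ‖x i - y i‖ ^ 2)
    (Fstar : ℝ) (xstar : PiLp 2 E) (hstar : Ffun f Ψ xstar = Fstar)
    (hmin : ∀ y, Fstar ≤ Ffun f Ψ y)
    (x : PiLp 2 E) (δ : Fin n → ℝ) (hδ : ∀ i, 0 ≤ δ i)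
    (T : PiLp 2 E) (hT : IsInexactUpdate f L Ψ δ x T) :
    Hfun f L Ψ x T - Fstar ≤
      (∑ i, δ i) + (1 - μf) / (1 + μΨ) * (Ffun f Ψ x - Fstar) := by
  classical
  have h1μ : (0:ℝ) < 1 + μΨ := by linarith
  set lam : ℝ := (μf + μΨ) / (1 + μΨ) with hlamdef
  have hlam0 : 0 < lam := div_pos hμpos h1μ
  have hlam1 : lam ≤ 1 := by rw [hlamdef, div_le_one h1μ]; linarith
  have hlam_eq : lam * (1 + μΨ) = μf + μΨ := div_mul_cancel₀ _ (ne_of_gt h1μ)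
  set y : PiLp 2 E := lam • xstar + (1 - lam) • x with hydef
  set T' : PiLp 2 E := y - x with hT'def
  have hT'eq : T' = lam • (xstar - x) := by rw [hT'def, hydef]; module
  -- decomposition of H as f x + sum of Vi
  have hsum : ∀ S : PiLp 2 E, Hfun f L Ψ x S = f x + ∑ i, Vi f L Ψ x i (S i) := by
    intro S
    have hhalf : ∑ i, (1:ℝ)/2 * (L i * ‖S i‖^2) = ∑ i, L i/2 * ‖S i‖^2 :=
      Finset.sum_congr rfl fun i _ => by ring
    simp only [Hfun, Vi, PiLp.inner_apply, Finset.sum_add_distrib, Finset.mul_sum, hhalf]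
    ring
  -- per-block inequality
  have hVile : ∀ i, Vi f L Ψ x i (T i) ≤ δ i + Vi f L Ψ x i (T' i) := by
    intro i
    have hbdd : BddBelow (Set.range fun t : E i => Vi f L Ψ x i t) := by
      obtain ⟨C, hC0, hC⟩ := convex_linear_lower_bound (Ψ i) (hΨconv i) (hΨcont i)
      obtain ⟨B, hB⟩ := quad_model_lower_bound ((gradient f x) i) (x i) (L i) C (hL i) hC0
        (Ψ i) hC
      refine ⟨B, ?_⟩
      rintro v ⟨t, rfl⟩
      exact hB t
    refine le_trans (le_trans (hT i) (min_le_right _ _)) ?_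
    exact add_le_add_right (ciInf_le hbdd (T' i)) _
  have hstep : Hfun f L Ψ x T ≤ (∑ i, δ i) + Hfun f L Ψ x T' := by
    rw [hsum T, hsum T']
    have h := Finset.sum_le_sum (fun i _ => hVile i) (s := Finset.univ)
    rw [Finset.sum_add_distrib] at h
    linarith
  -- main estimate at T'
  have hkey : Hfun f L Ψ x T' ≤ Fstar + (1 - lam) * (Ffun f Ψ x - Fstar) := by
    have hT'i : ∀ i, T' i = lam • (xstar i - x i) := by
      intro i; rw [hT'eq]; rfl
    have hxT : ∀ i, x i + T' i = y i := by
      intro i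
      have : T' i = y i - x i := rfl
      rw [this]; abel
    have hinner : ⟪gradient f x, T'⟫ = lam * ⟪gradient f x, xstar - x⟫ := by
      rw [hT'eq, real_inner_smul_right]
    set S := ∑ i, L i * ‖xstar i - x i‖ ^ 2 with hSdef
    have hSsum : ∑ i, L i * ‖T' i‖ ^ 2 = lam ^ 2 * S := by
      rw [hSdef, Finset.mul_sum]
      refine Finset.sum_congr rfl (fun i _ => ?_)
      rw [hT'i i, norm_smul, Real.norm_eq_abs, abs_of_pos hlam0, mul_pow]
      ring
    have hΨy := hscΨ xstar x lam ⟨hlam0.le, hlam1⟩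
    rw [← hSdef] at hΨy
    have hf1 := hscf x xstar
    rw [← hSdef] at hf1
    have hΨrw : ∑ i, Ψ i (x i + T' i) = ∑ i, Ψ i (y i) :=
      Finset.sum_congr rfl fun i _ => by rw [hxT i]
    have hFs : f xstar + ∑ i, Ψ i (xstar i) = Fstar := hstar
    have hcoef : lam * lam * S = lam * μf * S + μΨ * lam * (1 - lam) * S := by
      have h : lam * lam = lam * μf + μΨ * lam * (1 - lam) := by
        linear_combination lam * hlam_eq
      linear_combination S * h
    simp only [Hfun, Ffun]
    rw [hinner, hSsum, hΨrw]
    have hyy : ∑ i, Ψ i ((lam • xstar + (1 - lam) • x) i) = ∑ i, Ψ i (y i) := by rw [← hydef]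
    rw [hyy] at hΨy
    nlinarith [mul_le_mul_of_nonneg_left hf1 hlam0.le, hΨy, hcoef, hFs]
  have hlamrw : (1 - μf) / (1 + μΨ) = 1 - lam := by
    rw [hlamdef]; field_simp; ring
  rw [hlamrw]
  linarith [hstep, hkey]
end
end
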